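/- For a matrix A over a commutative ring in which row 1 is replaced by a copy of row i (i ≥ 2), the permanent is divisible by 2 in the sense that perm(A[1 ← i]) = 2 · Σ_{j < k} a_{ij} a_{ik} · perm(A[{1,i}̂, {j,k}̂]). -/
import Mathlib


/-- The permanent of a square matrix. -/
def Matrix.perm {n : ℕ} {R : Type*} [CommRing R] (A : Matrix (Fin n) (Fin n) R) : R :=
  ∑ σ : Equiv.Perm (Fin n), ∏ i, A i (σ i)

/-- The submatrix of `A` obtained by deleting the rows indexed by `s` and the columns
indexed by `t` (remaining rows/columns kept in increasing order); junk value if the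
cardinalities do not match. -/
def Matrix.delSub {m k : ℕ} {R : Type*} [CommRing R] (A : Matrix (Fin m) (Fin m) R)
    (s t : Finset (Fin m)) : Matrix (Fin k) (Fin k) R :=
  if h : sᶜ.card = k ∧ tᶜ.card = k then
    A.submatrix (fun a => (sᶜ.orderIsoOfFin h.1 a : Fin m))
      (fun b => (tᶜ.orderIsoOfFin h.2 b : Fin m))
  else 0

lemma pair_compl_card {m : ℕ} {x y : Fin (m + 2)} (h : x ≠ y) :
    ({x, y} : Finset (Fin (m + 2)))ᶜ.card = m := by
  rw [Finset.card_compl, Finset.card_insert_of_notMem (by simp [h]), Finset.card_singleton]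
  simp

section SigmaOf
variable {n : ℕ} (a b j k : Fin (n + 2)) (hab : a ≠ b) (hjk : j ≠ k)
  (π : Equiv.Perm (Fin n))

/-- The underlying function of the permutation sending `a ↦ j`, `b ↦ k` and acting as
(the conjugate of) `π` on the complements. -/
noncomputable def sigmaFun : Fin (n + 2) → Fin (n + 2) := fun r =>
  if h : r ∈ ({a, b} : Finset (Fin (n + 2)))ᶜ then
    ((({j, k} : Finset (Fin (n + 2)))ᶜ).orderIsoOfFin (pair_compl_card hjk)
      (π (((({a, b} : Finset (Fin (n + 2)))ᶜ).orderIsoOfFin (pair_compl_card hab)).symm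
        ⟨r, h⟩)) : Fin (n + 2))
  else if r = a then j else k

lemma sigmaFun_injective : Function.Injective (sigmaFun a b j k hab hjk π) := by
  intro r1 r2 h
  unfold sigmaFun at h
  by_cases h1 : r1 ∈ ({a, b} : Finset (Fin (n + 2)))ᶜ <;>
    by_cases h2 : r2 ∈ ({a, b} : Finset (Fin (n + 2)))ᶜ
  · rw [dif_pos h1, dif_pos h2] at h
    have h3 := ((({a, b} : Finset (Fin (n + 2)))ᶜ).orderIsoOfFin
        (pair_compl_card hab)).symm.injective
      (π.injective (((({j, k} : Finset (Fin (n + 2)))ᶜ).orderIsoOfFin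
        (pair_compl_card hjk)).injective (Subtype.coe_injective h)))
    exact congrArg Subtype.val h3
  · rw [dif_pos h1, dif_neg h2] at h
    have hm : (((({j, k} : Finset (Fin (n + 2)))ᶜ).orderIsoOfFin (pair_compl_card hjk)
        (π (((({a, b} : Finset (Fin (n + 2)))ᶜ).orderIsoOfFin (pair_compl_card hab)).symm
          ⟨r1, h1⟩))) : Fin (n + 2)) ∈ ({j, k} : Finset (Fin (n + 2)))ᶜ :=
      (((({j, k} : Finset (Fin (n + 2)))ᶜ).orderIsoOfFin (pair_compl_card hjk) _)).2
    rw [h] at hm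
    exfalso
    split_ifs at hm <;> simp at hm
  · rw [dif_neg h1, dif_pos h2] at h
    have hm : (((({j, k} : Finset (Fin (n + 2)))ᶜ).orderIsoOfFin (pair_compl_card hjk)
        (π (((({a, b} : Finset (Fin (n + 2)))ᶜ).orderIsoOfFin (pair_compl_card hab)).symm
          ⟨r2, h2⟩))) : Fin (n + 2)) ∈ ({j, k} : Finset (Fin (n + 2)))ᶜ :=
      (((({j, k} : Finset (Fin (n + 2)))ᶜ).orderIsoOfFin (pair_compl_card hjk) _)).2
    rw [← h] at hm
    exfalso
    split_ifs at hm <;> simp at hm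
  · rw [dif_neg h1, dif_neg h2] at h
    have ha1 : r1 ∈ ({a, b} : Finset (Fin (n + 2))) := by
      simpa using not_not.mp (by simpa [Finset.mem_compl] using h1)
    have ha2 : r2 ∈ ({a, b} : Finset (Fin (n + 2))) := by
      simpa using not_not.mp (by simpa [Finset.mem_compl] using h2)
    rcases Finset.mem_insert.mp ha1 with rfl | hb1 <;>
      rcases Finset.mem_insert.mp ha2 with rfl | hb2
    · rfl
    · obtain rfl := Finset.mem_singleton.mp hb2
      rw [if_pos rfl, if_neg (Ne.symm hab)] at h
      exact absurd h hjk
    · obtain rfl := Finset.mem_singleton.mp hb1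
      rw [if_neg (Ne.symm hab), if_pos rfl] at h
      exact absurd h.symm hjk
    · rw [Finset.mem_singleton.mp hb1, Finset.mem_singleton.mp hb2]

/-- The permutation sending `a ↦ j`, `b ↦ k` and acting via `π` on the complements. -/
noncomputable def sigmaOf : Equiv.Perm (Fin (n + 2)) :=
  Equiv.ofBijective (sigmaFun a b j k hab hjk π)
    (Finite.injective_iff_bijective.mp (sigmaFun_injective a b j k hab hjk π))

lemma sigmaOf_apply (r : Fin (n + 2)) :
    sigmaOf a b j k hab hjk π r = sigmaFun a b j k hab hjk π r := rfl

lemma sigmaOf_apply_a : sigmaOf a b j k hab hjk π a = j := by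
  rw [sigmaOf_apply, sigmaFun, dif_neg (by simp), if_pos rfl]

lemma sigmaOf_apply_b : sigmaOf a b j k hab hjk π b = k := by
  rw [sigmaOf_apply, sigmaFun, dif_neg (by simp), if_neg (Ne.symm hab)]

lemma sigmaOf_apply_orderIso (x : Fin n) :
    sigmaOf a b j k hab hjk π
        ((({a, b} : Finset (Fin (n + 2)))ᶜ).orderIsoOfFin (pair_compl_card hab) x) =
      (({j, k} : Finset (Fin (n + 2)))ᶜ).orderIsoOfFin (pair_compl_card hjk) (π x) := by
  rw [sigmaOf_apply, sigmaFun,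
    dif_pos ((({a, b} : Finset (Fin (n + 2)))ᶜ).orderIsoOfFin (pair_compl_card hab) x).2]
  congr 1
  congr 1
  rw [Subtype.coe_eta, OrderIso.symm_apply_apply]

end SigmaOf

lemma key_sum {n : ℕ} {R : Type*} [CommRing R] (A : Matrix (Fin (n + 2)) (Fin (n + 2)) R)
    (a b j k : Fin (n + 2)) (hab : a ≠ b) (hjk : j ≠ k) :
    ∑ σ ∈ Finset.univ.filter
        (fun σ : Equiv.Perm (Fin (n + 2)) => σ a = j ∧ σ b = k),
      ∏ r ∈ ({a, b} : Finset (Fin (n + 2)))ᶜ, A r (σ r)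
      = (Matrix.delSub (k := n) A {a, b} {j, k}).perm := by
  have hs := pair_compl_card hab
  have ht := pair_compl_card hjk
  rw [Matrix.delSub, dif_pos ⟨hs, ht⟩, Matrix.perm]
  refine (Finset.sum_bij (fun (π : Equiv.Perm (Fin n)) _ => sigmaOf a b j k hab hjk π)
    ?_ ?_ ?_ ?_).symm
  · intro π _
    simp only [Finset.mem_filter, Finset.mem_univ, true_and]
    exact ⟨sigmaOf_apply_a a b j k hab hjk π, sigmaOf_apply_b a b j k hab hjk π⟩
  · intro π1 _ π2 _ h
    apply Equiv.ext
    intro x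
    have h1 := congrFun (congrArg (fun e => (e : Equiv.Perm (Fin (n + 2))).toFun) h)
      ((({a, b} : Finset (Fin (n + 2)))ᶜ).orderIsoOfFin (pair_compl_card hab) x)
    simp only [Equiv.toFun_as_coe] at h1
    rw [sigmaOf_apply_orderIso, sigmaOf_apply_orderIso] at h1
    exact ((({j, k} : Finset (Fin (n + 2)))ᶜ).orderIsoOfFin
      (pair_compl_card hjk)).injective (Subtype.coe_injective h1)
  · intro σ hσ
    rw [Finset.mem_filter] at hσ
    obtain ⟨-, hσa, hσb⟩ := hσ
    -- σ maps the complement of {a,b} into the complement of {j,k}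
    have hmem : ∀ x : Fin n,
        σ ((({a, b} : Finset (Fin (n + 2)))ᶜ).orderIsoOfFin (pair_compl_card hab) x)
          ∈ ({j, k} : Finset (Fin (n + 2)))ᶜ := by
      intro x
      have hx := ((({a, b} : Finset (Fin (n + 2)))ᶜ).orderIsoOfFin (pair_compl_card hab) x).2
      rw [Finset.mem_compl] at hx ⊢
      intro hmem
      rcases Finset.mem_insert.mp hmem with h' | h'
      · exact hx (by rw [← hσa] at h'; rw [σ.injective h']; simp)
      · rw [Finset.mem_singleton] at h'
        exact hx (by rw [← hσb] at h'; rw [σ.injective h']; simp)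
    set pfun : Fin n → Fin n := fun x =>
      ((({j, k} : Finset (Fin (n + 2)))ᶜ).orderIsoOfFin (pair_compl_card hjk)).symm
        ⟨σ ((({a, b} : Finset (Fin (n + 2)))ᶜ).orderIsoOfFin (pair_compl_card hab) x),
          hmem x⟩ with hpfun
    have hinj : Function.Injective pfun := by
      intro x y h
      rw [hpfun] at h
      have h2 := congrArg (fun z => ((({j, k} : Finset (Fin (n + 2)))ᶜ).orderIsoOfFin
        (pair_compl_card hjk)) z) h
      simp only [OrderIso.apply_symm_apply] at h2
      have h3 : σ ((({a, b} : Finset (Fin (n + 2)))ᶜ).orderIsoOfFin (pair_compl_card hab) x)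
          = σ ((({a, b} : Finset (Fin (n + 2)))ᶜ).orderIsoOfFin (pair_compl_card hab) y) :=
        congrArg Subtype.val h2
      exact ((({a, b} : Finset (Fin (n + 2)))ᶜ).orderIsoOfFin
        (pair_compl_card hab)).injective (Subtype.coe_injective (σ.injective h3))
    refine ⟨Equiv.ofBijective pfun (Finite.injective_iff_bijective.mp hinj),
      Finset.mem_univ _, ?_⟩
    ext r
    rw [sigmaOf_apply, sigmaFun]
    by_cases h : r ∈ ({a, b} : Finset (Fin (n + 2)))ᶜ
    · rw [dif_pos h]
      have : Equiv.ofBijective pfun (Finite.injective_iff_bijective.mp hinj)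
          (((({a, b} : Finset (Fin (n + 2)))ᶜ).orderIsoOfFin (pair_compl_card hab)).symm
            ⟨r, h⟩) = pfun ((((({a, b} : Finset (Fin (n + 2)))ᶜ).orderIsoOfFin
            (pair_compl_card hab))).symm ⟨r, h⟩) := rfl
      rw [this, hpfun]
      simp only [OrderIso.apply_symm_apply]
    · rw [dif_neg h]
      have hr : r ∈ ({a, b} : Finset (Fin (n + 2))) := by
        simpa using not_not.mp (by simpa [Finset.mem_compl] using h)
      rcases Finset.mem_insert.mp hr with rfl | hr'
      · rw [if_pos rfl, hσa]
      · obtain rfl := Finset.mem_singleton.mp hr'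
        rw [if_neg (Ne.symm hab), hσb]
  · intro π _
    refine Eq.symm ?_
    rw [← Finset.prod_coe_sort]
    rw [← Equiv.prod_comp ((({a, b} : Finset (Fin (n + 2)))ᶜ).orderIsoOfFin
      (pair_compl_card hab)).toEquiv (fun y => A (y : Fin (n + 2))
        (sigmaOf a b j k hab hjk π (y : Fin (n + 2))))]
    simp only [RelIso.coe_fn_toEquiv]
    refine Finset.prod_congr rfl fun x _ => ?_
    rw [Matrix.submatrix_apply, sigmaOf_apply_orderIso]

/-- For `A[1 ← i]` (row `1` replaced by a copy of row `i`, `i ≠ 1`; rows indexed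
from `0`), the permanent is divisible by `2`:
`perm (A[1 ← i]) = 2 · Σ_{j < k} a_{ij} a_{ik} · perm (A[{1,i}̂, {j,k}̂])`. -/
theorem perm_updateRow_copy_two_mul {n : ℕ} {R : Type*} [CommRing R]
    (A : Matrix (Fin (n + 2)) (Fin (n + 2)) R) (i : Fin (n + 2)) (hi : i ≠ 0) :
    (A.updateRow 0 (A i)).perm =
      2 * ∑ p ∈ Finset.univ.filter (fun p : Fin (n + 2) × Fin (n + 2) => p.1 < p.2),
        A i p.1 * A i p.2 * (Matrix.delSub (k := n) A {0, i} {p.1, p.2}).perm := by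
  have h0i : (0 : Fin (n + 2)) ≠ i := Ne.symm hi
  rw [Matrix.perm]
  have hmaps : ∀ σ ∈ (Finset.univ : Finset (Equiv.Perm (Fin (n + 2)))),
      (σ 0, σ i) ∈ Finset.univ.filter
        (fun p : Fin (n + 2) × Fin (n + 2) => p.1 ≠ p.2) := by
    intro σ _
    simp only [Finset.mem_filter, Finset.mem_univ, true_and]
    exact fun h => h0i (σ.injective h)
  rw [← Finset.sum_fiberwise_of_maps_to hmaps
    (fun σ : Equiv.Perm (Fin (n + 2)) => ∏ r, (A.updateRow 0 (A i)) r (σ r))]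
  have hinner : ∀ p ∈ Finset.univ.filter
      (fun p : Fin (n + 2) × Fin (n + 2) => p.1 ≠ p.2),
      (∑ σ ∈ Finset.univ.filter
          (fun σ : Equiv.Perm (Fin (n + 2)) => (σ 0, σ i) = p),
        ∏ r, (A.updateRow 0 (A i)) r (σ r))
      = A i p.1 * A i p.2 * (Matrix.delSub (k := n) A {0, i} {p.1, p.2}).perm := by
    rintro ⟨j, k⟩ hp
    have hjk : j ≠ k := by simpa using hp
    have hfilter : (Finset.univ.filter
        (fun σ : Equiv.Perm (Fin (n + 2)) => (σ 0, σ i) = (j, k)))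
        = Finset.univ.filter
          (fun σ : Equiv.Perm (Fin (n + 2)) => σ 0 = j ∧ σ i = k) := by
      apply Finset.filter_congr
      intro σ _
      rw [Prod.mk.injEq]
    rw [hfilter]
    have hprod : ∀ σ ∈ Finset.univ.filter
        (fun σ : Equiv.Perm (Fin (n + 2)) => σ 0 = j ∧ σ i = k),
        ∏ r, (A.updateRow 0 (A i)) r (σ r)
        = A i j * A i k * ∏ r ∈ ({0, i} : Finset (Fin (n + 2)))ᶜ, A r (σ r) := by
      intro σ hσ
      rw [Finset.mem_filter] at hσ
      obtain ⟨-, h1, h2⟩ := hσ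
      rw [← Finset.prod_mul_prod_compl ({0, i} : Finset (Fin (n + 2)))]
      congr 1
      · rw [Finset.prod_insert (by simp [h0i]), Finset.prod_singleton, h1, h2,
          Matrix.updateRow_self, Matrix.updateRow_ne hi]
      · refine Finset.prod_congr rfl fun r hr => ?_
        have hr0 : r ≠ 0 := by
          rw [Finset.mem_compl] at hr
          intro h
          exact hr (by rw [h]; simp)
        rw [Matrix.updateRow_ne hr0]
    rw [Finset.sum_congr rfl hprod, ← Finset.mul_sum,
      key_sum A 0 i j k h0i hjk]
  rw [Finset.sum_congr rfl hinner]
  -- now split the sum over unequal pairs into < and >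
  have hsplit : (Finset.univ.filter (fun p : Fin (n + 2) × Fin (n + 2) => p.1 ≠ p.2))
      = (Finset.univ.filter (fun p : Fin (n + 2) × Fin (n + 2) => p.1 < p.2)) ∪
        (Finset.univ.filter (fun p : Fin (n + 2) × Fin (n + 2) => p.2 < p.1)) := by
    ext p
    simp only [Finset.mem_filter, Finset.mem_univ, true_and, Finset.mem_union]
    constructor
    · exact fun h => h.lt_or_gt
    · rintro (h | h)
      · exact h.ne
      · exact h.ne'
  have hdisj : Disjoint
      (Finset.univ.filter (fun p : Fin (n + 2) × Fin (n + 2) => p.1 < p.2))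
      (Finset.univ.filter (fun p : Fin (n + 2) × Fin (n + 2) => p.2 < p.1)) := by
    rw [Finset.disjoint_filter]
    intro p _ h1 h2
    exact absurd h1 (not_lt.mpr h2.le)
  rw [hsplit, Finset.sum_union hdisj]
  have hswap : ∑ p ∈ Finset.univ.filter
      (fun p : Fin (n + 2) × Fin (n + 2) => p.2 < p.1),
        A i p.1 * A i p.2 * (Matrix.delSub (k := n) A {0, i} {p.1, p.2}).perm
      = ∑ p ∈ Finset.univ.filter
        (fun p : Fin (n + 2) × Fin (n + 2) => p.1 < p.2),
        A i p.1 * A i p.2 * (Matrix.delSub (k := n) A {0, i} {p.1, p.2}).perm := by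
    refine Finset.sum_nbij' Prod.swap Prod.swap ?_ ?_ ?_ ?_ ?_
    · intro p hp; simpa using (by simpa using hp : p.2 < p.1)
    · intro p hp; simpa using (by simpa using hp : p.1 < p.2)
    · intro p _; exact Prod.swap_swap p
    · intro p _; exact Prod.swap_swap p
    · intro p _
      simp only [Prod.fst_swap, Prod.snd_swap]
      rw [Finset.pair_comm p.2 p.1, mul_comm (A i p.1)]
  rw [hswap, two_mul]
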